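/- Let ζ_1, ζ_2, … be i.i.d. real random variables with Eζ_1 = 0 and E|ζ_1|^r < ∞ for some r > 1, and let δ > 0. Then P(|Σ_{k=1}^n ζ_k| > nδ) = O(n^{1−r}) as n → ∞. -/

import Mathlib

open MeasureTheory ProbabilityTheory Filter Real Asymptotics

noncomputable section

private lemma aux_pow_pow (x y : ℝ) (hx : 0 ≤ x) (hy : 0 ≤ y) {α γ t : ℕ} (h : α + γ = t) :
    x ^ α * y ^ γ ≤ x ^ t + y ^ t := by
  rcases le_total x y with hxy | hxy
  · calc x ^ α * y ^ γ ≤ y ^ α * y ^ γ := by gcongr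
      _ = y ^ t := by rw [← pow_add, h]
      _ ≤ x ^ t + y ^ t := le_add_of_nonneg_left (by positivity)
  · calc x ^ α * y ^ γ ≤ x ^ α * x ^ γ := by gcongr
      _ = x ^ t := by rw [← pow_add, h]
      _ ≤ x ^ t + y ^ t := le_add_of_nonneg_right (by positivity)

private lemma aux_odd_abs (x c : ℝ) (s : ℕ) :
    2 * c * |x| ^ (2 * s + 1) ≤ c ^ 2 * |x| ^ (2 * s) + |x| ^ (2 * s + 2) := by
  have h1 : |x| ^ (2 * s) = (|x| ^ s) ^ 2 := by ring
  have h2 : |x| ^ (2 * s + 1) = |x| ^ s * |x| ^ (s + 1) := by ring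
  have h3 : |x| ^ (2 * s + 2) = (|x| ^ (s + 1)) ^ 2 := by ring
  rw [h1, h2, h3]
  nlinarith [sq_nonneg (c * |x| ^ s - |x| ^ (s + 1))]

private lemma aux_choose_le (n i : ℕ) : (n.choose i : ℝ) ≤ 2 ^ n := by
  have : n.choose i ≤ 2 ^ n := by
    rcases le_or_gt i n with h | h
    · calc n.choose i ≤ ∑ j ∈ Finset.range (n+1), n.choose j :=
            Finset.single_le_sum (fun j _ => Nat.zero_le _) (Finset.mem_range.2 (by omega))
        _ = 2 ^ n := Nat.sum_range_choose n
    · simp [Nat.choose_eq_zero_of_lt h]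
  exact_mod_cast this

private lemma abs_integral_le' {Ω : Type*} [MeasurableSpace Ω] (μ : Measure Ω) (f : Ω → ℝ) :
    |∫ ω, f ω ∂μ| ≤ ∫ ω, |f ω| ∂μ := by
  simpa [Real.norm_eq_abs] using norm_integral_le_integral_norm (μ := μ) f

private lemma integrable_of_abs_le {Ω : Type*} [MeasurableSpace Ω] {μ : Measure Ω}
    [IsFiniteMeasure μ] {f : Ω → ℝ} (hf : Measurable f) (C : ℝ) (h : ∀ ω, |f ω| ≤ C) :
    Integrable f μ :=
  (integrable_const C).mono' hf.aestronglyMeasurable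
    (Filter.Eventually.of_forall fun ω => by simpa using h ω)

set_option maxHeartbeats 1000000 in
/-- Rosenthal-type even moment bound for sums of independent, centered,
uniformly bounded random variables, with constant depending only on `m`. -/
private lemma momentBound {Ω : Type*} [MeasurableSpace Ω] (μ : Measure Ω)
    [IsProbabilityMeasure μ] (m : ℕ) :
    ∃ D : ℝ, 1 ≤ D ∧ ∀ (Y : ℕ → Ω → ℝ),
      (∀ k, Measurable (Y k)) →
      (iIndepFun Y μ) →
      ∀ (c₀ : ℝ), 0 ≤ c₀ → (∀ k ω, |Y k ω| ≤ c₀) →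
      (∀ k, ∫ ω, Y k ω ∂μ = 0) →
      ∀ (c v : ℝ), 1 ≤ c → 0 ≤ v →
      (∀ k a, 2 ≤ a → a ≤ 2 * m → ∫ ω, |Y k ω| ^ a ∂μ ≤ v * c ^ (a - 2)) →
      ∀ (t : ℕ), 1 ≤ t → t ≤ m → ∀ (ℓ : ℕ),
      ∫ ω, (∑ k ∈ Finset.range ℓ, Y k ω) ^ (2 * t) ∂μ
        ≤ D * ((ℓ : ℝ) * v * c ^ (2 * t - 2) + ((ℓ : ℝ) * v) ^ t) := by
  induction m with
  | zero => exact ⟨1, le_refl 1, by intro _ _ _ _ _ _ _ _ _ _ _ _ t ht1 ht0; omega⟩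
  | succ m IH =>
    obtain ⟨D, hD1, hDm⟩ := IH
    refine ⟨(((2*m+2) * 2^(2*m+4) : ℕ) : ℝ) * D, ?_, ?_⟩
    · have hK : (1:ℝ) ≤ (((2*m+2) * 2^(2*m+4) : ℕ) : ℝ) := by
        exact_mod_cast Nat.one_le_iff_ne_zero.mpr (by positivity)
      nlinarith
    intro Y hYmeas hYindep c₀ hc₀0 hc₀ hYmean c v hc hv hmom t ht1 ht ℓ
    have hK : (1:ℝ) ≤ (((2*m+2) * 2^(2*m+4) : ℕ) : ℝ) := by
      exact_mod_cast Nat.one_le_iff_ne_zero.mpr (by positivity)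
    have hc0 : (0:ℝ) < c := lt_of_lt_of_le one_pos hc
    -- the case `t ≤ m` follows from the inductive hypothesis
    have hDm' : ∀ s, 1 ≤ s → s ≤ m → ∀ ℓ' : ℕ,
        ∫ ω, (∑ k ∈ Finset.range ℓ', Y k ω) ^ (2*s) ∂μ
          ≤ D * ((ℓ' : ℝ) * v * c ^ (2*s-2) + ((ℓ' : ℝ) * v) ^ s) :=
      fun s h1 h2 ℓ' => hDm Y hYmeas hYindep c₀ hc₀0 hc₀ hYmean c v hc hv
        (fun k a ha ham => hmom k a ha (by omega)) s h1 h2 ℓ'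
    rcases Nat.lt_or_ge t (m+1) with htm | htm
    · have h := hDm' t ht1 (by omega) ℓ
      refine h.trans ?_
      have hX : (0:ℝ) ≤ (ℓ : ℝ) * v * c ^ (2*t-2) + ((ℓ : ℝ) * v) ^ t := by positivity
      have hDX : (0:ℝ) ≤ D * ((ℓ : ℝ) * v * c ^ (2*t-2) + ((ℓ : ℝ) * v) ^ t) :=
        mul_nonneg (by linarith) hX
      nlinarith [mul_le_mul_of_nonneg_right hK hDX]
    have htm1 : t = m + 1 := by omega
    subst htm1
    -- basic integrability facts
    have hSmeas : ∀ ℓ' : ℕ, Measurable (fun ω => ∑ k ∈ Finset.range ℓ', Y k ω) :=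
      fun ℓ' => Finset.measurable_sum _ fun k _ => hYmeas k
    have hSb : ∀ (ℓ' : ℕ) ω, |∑ k ∈ Finset.range ℓ', Y k ω| ≤ ℓ' * c₀ := by
      intro ℓ' ω
      calc |∑ k ∈ Finset.range ℓ', Y k ω| ≤ ∑ k ∈ Finset.range ℓ', |Y k ω| :=
            Finset.abs_sum_le_sum_abs _ _
        _ ≤ ∑ k ∈ Finset.range ℓ', c₀ := Finset.sum_le_sum fun k _ => hc₀ k ω
        _ = ℓ' * c₀ := by simp [mul_comm]
    have hIntSY : ∀ (ℓ' : ℕ) (i b : ℕ),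
        Integrable (fun ω => (∑ k ∈ Finset.range ℓ', Y k ω) ^ i * Y ℓ' ω ^ b) μ := by
      intro ℓ' i b
      refine integrable_of_abs_le (((hSmeas ℓ').pow_const i).mul ((hYmeas ℓ').pow_const b))
        (((ℓ' : ℝ) * c₀) ^ i * c₀ ^ b) ?_
      intro ω
      rw [abs_mul, abs_pow, abs_pow]
      have h1 : |∑ k ∈ Finset.range ℓ', Y k ω| ^ i ≤ ((ℓ' : ℝ) * c₀) ^ i := by
        gcongr
        · exact hSb ℓ' ω
      have h2 : |Y ℓ' ω| ^ b ≤ c₀ ^ b := by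
        gcongr
        · exact hc₀ ℓ' ω
      exact mul_le_mul h1 h2 (by positivity) (by positivity)
    have hIntS : ∀ (ℓ' : ℕ) (i : ℕ),
        Integrable (fun ω => (∑ k ∈ Finset.range ℓ', Y k ω) ^ i) μ := by
      intro ℓ' i
      refine integrable_of_abs_le ((hSmeas ℓ').pow_const i) (((ℓ' : ℝ) * c₀) ^ i) ?_
      intro ω
      rw [abs_pow]
      gcongr
      · exact hSb ℓ' ω
    have hIntAbsS : ∀ (ℓ' : ℕ) (i : ℕ),
        Integrable (fun ω => |∑ k ∈ Finset.range ℓ', Y k ω| ^ i) μ := by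
      intro ℓ' i
      refine integrable_of_abs_le ((hSmeas ℓ').abs.pow_const i) (((ℓ' : ℝ) * c₀) ^ i) ?_
      intro ω
      rw [abs_pow, abs_abs]
      gcongr
      · exact hSb ℓ' ω
    have hIntY : ∀ (k : ℕ) (b : ℕ), Integrable (fun ω => Y k ω ^ b) μ := by
      intro k b
      refine integrable_of_abs_le ((hYmeas k).pow_const b) (c₀ ^ b) ?_
      intro ω
      rw [abs_pow]
      gcongr
      · exact hc₀ k ω
    have hIntAbsY : ∀ (k : ℕ) (b : ℕ), Integrable (fun ω => |Y k ω| ^ b) μ := by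
      intro k b
      refine integrable_of_abs_le ((hYmeas k).abs.pow_const b) (c₀ ^ b) ?_
      intro ω
      rw [abs_pow, abs_abs]
      gcongr
      · exact hc₀ k ω
    have habsY : ∀ b : ℕ, 2 ≤ b → b ≤ 2*m+2 → ∀ k : ℕ,
        |∫ ω, Y k ω ^ b ∂μ| ≤ v * c ^ (b - 2) := by
      intro b hb2 hbm k
      calc |∫ ω, Y k ω ^ b ∂μ| ≤ ∫ ω, |Y k ω ^ b| ∂μ := abs_integral_le' μ _
        _ = ∫ ω, |Y k ω| ^ b ∂μ := by
            congr 1 with ω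
            exact abs_pow _ _
        _ ≤ v * c ^ (b - 2) := hmom k b hb2 (by omega)
    -- the inductive hypothesis, in the form needed below
    clear ht1 ht htm
    induction ℓ with
    | zero =>
      simp only [Finset.range_zero, Finset.sum_empty, Nat.cast_zero]
      rw [zero_pow (by positivity), integral_zero]
      have : ((0:ℝ) * v) ^ (m+1) = 0 := by
        rw [zero_mul]
        exact zero_pow (by omega)
      rw [this, zero_mul, zero_mul, add_zero, mul_zero]
    | succ ℓ IHl =>
      set T : ℝ := v * c ^ (2*m) + v^(m+1) * (ℓ:ℝ)^m with hT
      have hTnn : 0 ≤ T := by positivity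
      have hDnn : (0:ℝ) < D := lt_of_lt_of_le one_pos hD1
      -- the two-parameter bound on even moments multiplied by the moment weight
      have hbound2 : ∀ s : ℕ, s ≤ m →
          (∫ ω, |∑ k ∈ Finset.range ℓ, Y k ω| ^ (2*s) ∂μ) * (v * c ^ (2*(m-s)))
            ≤ 2 * (D * T) := by
        intro s hsm
        rcases Nat.eq_zero_or_pos s with hs0 | hs1
        · subst hs0
          simp only [Nat.mul_zero, pow_zero, Nat.sub_zero, integral_const, measure_univ,
            probReal_univ, smul_eq_mul, one_mul, mul_one]
          have h1 : v * c ^ (2*m) ≤ T := le_add_of_nonneg_right (by positivity)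
          nlinarith
        · have heven : (∫ ω, |∑ k ∈ Finset.range ℓ, Y k ω| ^ (2*s) ∂μ)
              = ∫ ω, (∑ k ∈ Finset.range ℓ, Y k ω) ^ (2*s) ∂μ := by
            congr 1 with ω
            rw [pow_mul, sq_abs, ← pow_mul]
          rw [heven]
          have hIH := hDm' s hs1 hsm ℓ
          have hwnn : (0:ℝ) ≤ v * c ^ (2*(m-s)) := by positivity
          have hmul := mul_le_mul_of_nonneg_right hIH hwnn
          refine hmul.trans ?_
          have e1 : (ℓ:ℝ) * v * c ^ (2*s-2) * (v * c ^ (2*(m-s))) ≤ T := by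
            have hce : c ^ (2*s-2) * c ^ (2*(m-s)) = ((c^2) : ℝ) ^ (m-1) := by
              rw [← pow_add, ← pow_mul]
              congr 1
              omega
            have hstep : ((ℓ:ℝ) * v) ^ 1 * ((c^2) : ℝ) ^ (m-1) ≤ ((ℓ:ℝ)*v) ^ m + ((c^2):ℝ) ^ m :=
              aux_pow_pow _ _ (by positivity) (by positivity) (by omega)
            have hrw : (ℓ:ℝ) * v * c ^ (2*s-2) * (v * c ^ (2*(m-s)))
                = (((ℓ:ℝ) * v) ^ 1 * ((c^2) : ℝ) ^ (m-1)) * v := by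
              rw [← hce]; ring
            rw [hrw, hT]
            have : (((ℓ:ℝ)*v) ^ m + ((c^2):ℝ) ^ m) * v
                = v * c ^ (2*m) + v^(m+1) * (ℓ:ℝ)^m := by
              rw [mul_pow, ← pow_mul]
              ring
            nlinarith [mul_le_mul_of_nonneg_right hstep hv]
          have e2 : ((ℓ:ℝ) * v) ^ s * (v * c ^ (2*(m-s))) ≤ T := by
            have hce : (c : ℝ) ^ (2*(m-s)) = ((c^2) : ℝ) ^ (m-s) := by
              rw [← pow_mul]
            have hstep : ((ℓ:ℝ) * v) ^ s * ((c^2) : ℝ) ^ (m-s) ≤ ((ℓ:ℝ)*v) ^ m + ((c^2):ℝ) ^ m :=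
              aux_pow_pow _ _ (by positivity) (by positivity) (by omega)
            have hrw : ((ℓ:ℝ) * v) ^ s * (v * c ^ (2*(m-s)))
                = (((ℓ:ℝ) * v) ^ s * ((c^2) : ℝ) ^ (m-s)) * v := by
              rw [← hce]; ring
            rw [hrw, hT]
            have : (((ℓ:ℝ)*v) ^ m + ((c^2):ℝ) ^ m) * v
                = v * c ^ (2*m) + v^(m+1) * (ℓ:ℝ)^m := by
              rw [mul_pow, ← pow_mul]
              ring
            nlinarith [mul_le_mul_of_nonneg_right hstep hv]
          calc D * ((ℓ:ℝ) * v * c ^ (2*s-2) + ((ℓ:ℝ)*v) ^ s) * (v * c ^ (2*(m-s)))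
              = D * ((ℓ:ℝ) * v * c ^ (2*s-2) * (v * c ^ (2*(m-s))))
                + D * (((ℓ:ℝ)*v) ^ s * (v * c ^ (2*(m-s)))) := by ring
            _ ≤ D * T + D * T := by
                have := mul_le_mul_of_nonneg_left e1 hDnn.le
                have := mul_le_mul_of_nonneg_left e2 hDnn.le
                linarith
            _ = 2 * (D * T) := by ring
      -- core estimate for each term of the binomial expansion
      have hcore : ∀ i : ℕ, i ≤ 2*m →
          (∫ ω, |∑ k ∈ Finset.range ℓ, Y k ω| ^ i ∂μ) * (v * c ^ (2*m - i))
            ≤ 4 * (D * T) := by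
        intro i hi
        rcases Nat.even_or_odd i with ⟨s, hs⟩ | ⟨s, hs⟩
        · have hieq : i = 2*s := by omega
          subst hieq
          have hsm : s ≤ m := by omega
          have hexp : 2*m - 2*s = 2*(m-s) := by omega
          rw [hexp]
          have := hbound2 s hsm
          nlinarith
        · -- odd case, AM-GM
          have hieq : i = 2*s+1 := by omega
          subst hieq
          have hsm : s < m := by omega
          set A : ℝ := ∫ ω, |∑ k ∈ Finset.range ℓ, Y k ω| ^ (2*s) ∂μ with hA
          set B : ℝ := ∫ ω, |∑ k ∈ Finset.range ℓ, Y k ω| ^ (2*s+2) ∂μ with hB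
          have hstep : 2*c*(∫ ω, |∑ k ∈ Finset.range ℓ, Y k ω| ^ (2*s+1) ∂μ)
              ≤ c^2 * A + B := by
            have hmono := integral_mono (μ := μ)
              ((hIntAbsS ℓ (2*s+1)).const_mul (2*c))
              (((hIntAbsS ℓ (2*s)).const_mul (c^2)).add (hIntAbsS ℓ (2*s+2)))
              (fun ω => aux_odd_abs (∑ k ∈ Finset.range ℓ, Y k ω) c s)
            simp only [Pi.add_apply] at hmono
            rwa [integral_const_mul, integral_add ((hIntAbsS ℓ (2*s)).const_mul (c^2))
              (hIntAbsS ℓ (2*s+2)), integral_const_mul] at hmono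
          have hIabs : (0:ℝ) ≤ ∫ ω, |∑ k ∈ Finset.range ℓ, Y k ω| ^ (2*s+1) ∂μ :=
            integral_nonneg fun ω => by positivity
          have hAnn : (0:ℝ) ≤ A := integral_nonneg fun ω => by positivity
          have hBnn : (0:ℝ) ≤ B := integral_nonneg fun ω => by positivity
          rw [← mul_le_mul_iff_right₀ (show (0:ℝ) < 2*c by positivity)]
          have hw : (0:ℝ) ≤ v * c ^ (2*m - (2*s+1)) := by positivity
          calc 2*c*((∫ ω, |∑ k ∈ Finset.range ℓ, Y k ω| ^ (2*s+1) ∂μ) * (v * c ^ (2*m - (2*s+1))))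
              = (2*c*(∫ ω, |∑ k ∈ Finset.range ℓ, Y k ω| ^ (2*s+1) ∂μ)) * (v * c ^ (2*m - (2*s+1))) := by
                ring
            _ ≤ (c^2 * A + B) * (v * c ^ (2*m - (2*s+1))) :=
                mul_le_mul_of_nonneg_right hstep hw
            _ = c * (A * (v * c ^ (2*(m-s)))) + c * (B * (v * c ^ (2*(m-(s+1))))) := by
                have h2 : (c:ℝ) ^ (2*m - (2*s+1)) = c * c ^ (2*(m-(s+1))) := by
                  rw [← pow_succ']
                  congr 1
                  omega
                have h3 : (c:ℝ) ^ (2*(m-s)) = c^2 * c ^ (2*(m-(s+1))) := by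
                  rw [← pow_add]
                  congr 1
                  omega
                rw [h2, h3]
                ring
            _ ≤ c * (2 * (D * T)) + c * (2 * (D * T)) := by
                have hb1 := hbound2 s (by omega)
                have hb2 := hbound2 (s+1) (by omega)
                have hb2' : B * (v * c ^ (2*(m-(s+1)))) ≤ 2 * (D * T) := by
                  have hE : 2*(s+1) = 2*s+2 := by omega
                  rw [hE] at hb2
                  exact hb2
                have hc1 := mul_le_mul_of_nonneg_left hb1 hc0.le
                have hc2 := mul_le_mul_of_nonneg_left hb2' hc0.le
                linarith
            _ ≤ 2*c*(4 * (D * T)) := by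
                linarith [mul_nonneg hc0.le (mul_nonneg hDnn.le hTnn)]
      -- binomial expansion of the (2m+2)-nd moment
      have eA : 2*(m+1) = 2*m+2 := by omega
      have eB : 2*(m+1)-2 = 2*m := by omega
      rw [eB, eA] at IHl ⊢
      push_cast at IHl ⊢
      have hpt : ∀ ω : Ω, (∑ k ∈ Finset.range (ℓ+1), Y k ω) ^ (2*m+2)
          = ∑ i ∈ Finset.range (2*m+3),
              (∑ k ∈ Finset.range ℓ, Y k ω) ^ i * Y ℓ ω ^ (2*m+2-i) * ((2*m+2).choose i : ℝ) := by
        intro ω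
        rw [Finset.sum_range_succ]
        exact add_pow _ _ _
      have hindepSY : IndepFun (fun ω => ∑ k ∈ Finset.range ℓ, Y k ω) (Y ℓ) μ := by
        have h := hYindep.indepFun_finsetSum_of_notMem hYmeas
          (Finset.notMem_range_self (n := ℓ))
        convert h using 1
        ext ω
        simp [Finset.sum_apply]
      have hprod : ∀ i b : ℕ, ∫ ω, (∑ k ∈ Finset.range ℓ, Y k ω) ^ i * Y ℓ ω ^ b ∂μ
          = (∫ ω, (∑ k ∈ Finset.range ℓ, Y k ω) ^ i ∂μ) * ∫ ω, Y ℓ ω ^ b ∂μ := fun i b =>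
        (hindepSY.comp (measurable_id.pow_const i)
          (measurable_id.pow_const b)).integral_fun_mul_eq_mul_integral (hIntS ℓ i).aestronglyMeasurable
            (hIntY ℓ b).aestronglyMeasurable
      have hexp : ∫ ω, (∑ k ∈ Finset.range (ℓ+1), Y k ω) ^ (2*m+2) ∂μ
          = ∑ i ∈ Finset.range (2*m+3),
              ((∫ ω, (∑ k ∈ Finset.range ℓ, Y k ω) ^ i ∂μ) * (∫ ω, Y ℓ ω ^ (2*m+2-i) ∂μ))
                * ((2*m+2).choose i : ℝ) := by
        calc ∫ ω, (∑ k ∈ Finset.range (ℓ+1), Y k ω) ^ (2*m+2) ∂μ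
            = ∫ ω, ∑ i ∈ Finset.range (2*m+3),
                (∑ k ∈ Finset.range ℓ, Y k ω) ^ i * Y ℓ ω ^ (2*m+2-i)
                  * ((2*m+2).choose i : ℝ) ∂μ :=
              integral_congr_ae (Filter.Eventually.of_forall hpt)
          _ = ∑ i ∈ Finset.range (2*m+3),
                ∫ ω, (∑ k ∈ Finset.range ℓ, Y k ω) ^ i * Y ℓ ω ^ (2*m+2-i)
                  * ((2*m+2).choose i : ℝ) ∂μ :=
              integral_finset_sum _ (fun i _ => (hIntSY ℓ i (2*m+2-i)).mul_const _)
          _ = ∑ i ∈ Finset.range (2*m+3),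
                ((∫ ω, (∑ k ∈ Finset.range ℓ, Y k ω) ^ i ∂μ)
                  * (∫ ω, Y ℓ ω ^ (2*m+2-i) ∂μ)) * ((2*m+2).choose i : ℝ) := by
              refine Finset.sum_congr rfl fun i _ => ?_
              rw [integral_mul_const, hprod]
      have hexp2 : ∫ ω, (∑ k ∈ Finset.range (ℓ+1), Y k ω) ^ (2*m+2) ∂μ
          = (∑ i ∈ Finset.range (2*m+1),
              ((∫ ω, (∑ k ∈ Finset.range ℓ, Y k ω) ^ i ∂μ) * (∫ ω, Y ℓ ω ^ (2*m+2-i) ∂μ))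
                * ((2*m+2).choose i : ℝ))
            + ∫ ω, (∑ k ∈ Finset.range ℓ, Y k ω) ^ (2*m+2) ∂μ := by
        rw [hexp]
        rw [show 2*m+3 = (2*m+1)+1+1 from by omega, Finset.sum_range_succ,
          Finset.sum_range_succ]
        have hv1 : (∫ ω, Y ℓ ω ^ (2*m+2-(2*m+1)) ∂μ) = 0 := by
          rw [show 2*m+2-(2*m+1) = 1 from by omega]
          simp only [pow_one]
          exact hYmean ℓ
        have hv0 : (∫ ω, Y ℓ ω ^ (2*m+2-(2*m+1+1)) ∂μ) = 1 := by
          rw [show 2*m+2-(2*m+1+1) = 0 from by omega]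
          simp
        rw [hv1, hv0]
        rw [show (2*m+1+1) = 2*m+2 from by omega, Nat.choose_self]
        push_cast
        ring
      -- bound each remaining term
      have hterm : ∀ i ∈ Finset.range (2*m+1),
          ((∫ ω, (∑ k ∈ Finset.range ℓ, Y k ω) ^ i ∂μ) * (∫ ω, Y ℓ ω ^ (2*m+2-i) ∂μ))
            * ((2*m+2).choose i : ℝ) ≤ 2^(2*m+2) * (4 * (D * T)) := by
        intro i hi
        have hi' : i ≤ 2*m := by
          have := Finset.mem_range.mp hi
          omega
        have hb : |∫ ω, Y ℓ ω ^ (2*m+2-i) ∂μ| ≤ v * c ^ (2*m-i) := by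
          have h := habsY (2*m+2-i) (by omega) (by omega) ℓ
          rwa [show 2*m+2-i-2 = 2*m-i from by omega] at h
        have hs : |∫ ω, (∑ k ∈ Finset.range ℓ, Y k ω) ^ i ∂μ|
            ≤ ∫ ω, |∑ k ∈ Finset.range ℓ, Y k ω| ^ i ∂μ := by
          refine (abs_integral_le' μ _).trans_eq ?_
          congr 1 with ω
          exact abs_pow _ _
        have hnn1 : (0:ℝ) ≤ ∫ ω, |∑ k ∈ Finset.range ℓ, Y k ω| ^ i ∂μ :=
          integral_nonneg fun ω => by positivity
        have hCnn : (0:ℝ) ≤ ((2*m+2).choose i : ℝ) := Nat.cast_nonneg _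
        calc ((∫ ω, (∑ k ∈ Finset.range ℓ, Y k ω) ^ i ∂μ) * (∫ ω, Y ℓ ω ^ (2*m+2-i) ∂μ))
              * ((2*m+2).choose i : ℝ)
            ≤ |((∫ ω, (∑ k ∈ Finset.range ℓ, Y k ω) ^ i ∂μ) * (∫ ω, Y ℓ ω ^ (2*m+2-i) ∂μ))
              * ((2*m+2).choose i : ℝ)| := le_abs_self _
          _ = (|∫ ω, (∑ k ∈ Finset.range ℓ, Y k ω) ^ i ∂μ| * |∫ ω, Y ℓ ω ^ (2*m+2-i) ∂μ|)
              * ((2*m+2).choose i : ℝ) := by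
              rw [abs_mul, abs_mul, Nat.abs_cast]
          _ ≤ ((∫ ω, |∑ k ∈ Finset.range ℓ, Y k ω| ^ i ∂μ) * (v * c ^ (2*m-i)))
              * ((2*m+2).choose i : ℝ) := by
              have := mul_le_mul hs hb (abs_nonneg _) hnn1
              exact mul_le_mul_of_nonneg_right this hCnn
          _ ≤ (4 * (D * T)) * 2^(2*m+2) := by
              have h1 := hcore i hi'
              have hC := aux_choose_le (2*m+2) i
              have hnn2 : (0:ℝ) ≤ (∫ ω, |∑ k ∈ Finset.range ℓ, Y k ω| ^ i ∂μ)
                  * (v * c ^ (2*m-i)) := mul_nonneg hnn1 (by positivity)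
              exact mul_le_mul h1 hC hCnn (by positivity)
          _ = 2^(2*m+2) * (4 * (D * T)) := by ring
      have hsumle : (∑ i ∈ Finset.range (2*m+1),
          ((∫ ω, (∑ k ∈ Finset.range ℓ, Y k ω) ^ i ∂μ) * (∫ ω, Y ℓ ω ^ (2*m+2-i) ∂μ))
            * ((2*m+2).choose i : ℝ))
          ≤ (2*m+1 : ℝ) * (2^(2*m+2) * (4 * (D * T))) := by
        calc (∑ i ∈ Finset.range (2*m+1),
            ((∫ ω, (∑ k ∈ Finset.range ℓ, Y k ω) ^ i ∂μ) * (∫ ω, Y ℓ ω ^ (2*m+2-i) ∂μ))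
              * ((2*m+2).choose i : ℝ))
            ≤ ∑ _i ∈ Finset.range (2*m+1), 2^(2*m+2) * (4 * (D * T)) :=
              Finset.sum_le_sum hterm
          _ = (2*m+1 : ℝ) * (2^(2*m+2) * (4 * (D * T))) := by
              rw [Finset.sum_const, Finset.card_range, nsmul_eq_mul]
              push_cast
              ring
      -- the constant comparison
      have hKcomp : (2*m+1 : ℝ) * (2^(2*m+2) * 4) ≤ (((2*m+2) * 2^(2*m+4) : ℕ) : ℝ) := by
        have hn : (2*m+1) * (2^(2*m+2) * 4) ≤ (2*m+2) * 2^(2*m+4) := by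
          have h4 : (2:ℕ)^(2*m+4) = 2^(2*m+2) * 4 := by
            rw [show 2*m+4 = (2*m+2)+2 from by omega, pow_add]
            norm_num
          rw [h4]
          exact Nat.mul_le_mul_right _ (by omega)
        calc (2*m+1 : ℝ) * (2^(2*m+2) * 4) = (((2*m+1) * (2^(2*m+2) * 4) : ℕ) : ℝ) := by
              push_cast
              ring
          _ ≤ (((2*m+2) * 2^(2*m+4) : ℕ) : ℝ) := by exact_mod_cast hn
      -- increment of the target function
      have hWdiff : T ≤ ((ℓ:ℝ)+1) * v * c ^ (2*m) - (ℓ:ℝ) * v * c ^ (2*m)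
          + ((((ℓ:ℝ)+1) * v) ^ (m+1) - ((ℓ:ℝ) * v) ^ (m+1)) := by
        have hp : ((ℓ:ℝ))^(m+1) + (ℓ:ℝ)^m ≤ ((ℓ:ℝ)+1)^(m+1) := by
          have h1 : ((ℓ:ℝ))^m * ((ℓ:ℝ)+1) ≤ ((ℓ:ℝ)+1)^m * ((ℓ:ℝ)+1) := by
            have := pow_le_pow_left₀ (by positivity : (0:ℝ) ≤ (ℓ:ℝ)) (by linarith : (ℓ:ℝ) ≤ (ℓ:ℝ)+1) m
            nlinarith [this, Nat.cast_nonneg (α := ℝ) ℓ]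
          calc ((ℓ:ℝ))^(m+1) + (ℓ:ℝ)^m = (ℓ:ℝ)^m * ((ℓ:ℝ)+1) := by ring
            _ ≤ ((ℓ:ℝ)+1)^m * ((ℓ:ℝ)+1) := h1
            _ = ((ℓ:ℝ)+1)^(m+1) := by ring
        have h2 : (((ℓ:ℝ)+1) * v) ^ (m+1) = ((ℓ:ℝ)+1)^(m+1) * v^(m+1) := mul_pow _ _ _
        have h3 : (((ℓ:ℝ)) * v) ^ (m+1) = ((ℓ:ℝ))^(m+1) * v^(m+1) := mul_pow _ _ _
        rw [hT, h2, h3]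
        have h4 : (ℓ:ℝ)^m * v^(m+1) ≤ (((ℓ:ℝ)+1)^(m+1) - ((ℓ:ℝ))^(m+1)) * v^(m+1) := by
          have hvp : (0:ℝ) ≤ v^(m+1) := by positivity
          nlinarith [mul_le_mul_of_nonneg_right hp hvp]
        nlinarith [h4]
      -- put everything together
      have hKD : (0:ℝ) ≤ (((2*m+2) * 2^(2*m+4) : ℕ) : ℝ) * D := by positivity
      have hDT : (0:ℝ) ≤ D * T := mul_nonneg hDnn.le hTnn
      rw [hexp2]
      have hstep1 : (2*m+1 : ℝ) * (2^(2*m+2) * (4 * (D * T)))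
          ≤ (((2*m+2) * 2^(2*m+4) : ℕ) : ℝ) * (D * T) := by
        have := mul_le_mul_of_nonneg_right hKcomp hDT
        nlinarith [this]
      have hfin : (((2*m+2) * 2^(2*m+4) : ℕ) : ℝ) * D * ((ℓ:ℝ) * v * c ^ (2*m) + ((ℓ:ℝ)*v)^(m+1))
          + (((2*m+2) * 2^(2*m+4) : ℕ) : ℝ) * (D * T)
          ≤ (((2*m+2) * 2^(2*m+4) : ℕ) : ℝ) * D * (((ℓ:ℝ)+1) * v * c ^ (2*m) + (((ℓ:ℝ)+1)*v)^(m+1)) := by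
        have := mul_le_mul_of_nonneg_left hWdiff hKD
        nlinarith [this]
      push_cast at hstep1 hfin
      linarith [hsumle, IHl, hstep1, hfin]


private lemma add_pow_le' (x y : ℝ) (hx : 0 ≤ x) (hy : 0 ≤ y) (a : ℕ) :
    (x + y) ^ a ≤ 2 ^ a * (x ^ a + y ^ a) := by
  have h1 : x + y ≤ 2 * max x y := by
    rcases le_total x y with h | h
    · rw [max_eq_right h]; linarith
    · rw [max_eq_left h]; linarith
  calc (x + y) ^ a ≤ (2 * max x y) ^ a := by
        gcongr
    _ = 2 ^ a * (max x y) ^ a := mul_pow _ _ _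
    _ ≤ 2 ^ a * (x ^ a + y ^ a) := by
        have : (max x y) ^ a ≤ x ^ a + y ^ a := by
          rcases le_total x y with h | h
          · rw [max_eq_right h]; exact le_add_of_nonneg_left (by positivity)
          · rw [max_eq_left h]; exact le_add_of_nonneg_right (by positivity)
        have h2 : (0:ℝ) ≤ 2 ^ a := by positivity
        nlinarith
set_option maxHeartbeats 2000000 in
/-- Display (2.4): if `ζ_1, ζ_2, …` are i.i.d. with mean zero and `E|ζ_1|^r < ∞` for some
`r > 1`, then for any fixed `δ > 0`, `P(|Σ_{k=1}^n ζ_k| > nδ) = O(n^{1−r})` as `n → ∞`. -/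
theorem iid_tail_bound
    {Ω : Type*} [MeasurableSpace Ω] {μ : Measure Ω} [IsProbabilityMeasure μ]
    (ζ : ℕ → Ω → ℝ)
    (hmeas : ∀ k, Measurable (ζ k))
    (hindep : iIndepFun ζ μ)
    (hid : ∀ k, IdentDistrib (ζ k) (ζ 0) μ μ)
    (hint : Integrable (ζ 0) μ)
    (hmean : ∫ ω, ζ 0 ω ∂μ = 0)
    (r : ℝ) (hr : 1 < r)
    (hmom : Integrable (fun ω => |ζ 0 ω| ^ r) μ)
    (δ : ℝ) (hδ : 0 < δ) :
    (fun n : ℕ => (μ {ω | (n : ℝ) * δ < |∑ k ∈ Finset.range n, ζ k ω|}).toReal)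
      =O[atTop] (fun n : ℕ => (n : ℝ) ^ ((1 : ℝ) - r)) := by
  classical
  have hρ0 : (0:ℝ) ≤ ∫ ω, |ζ 0 ω| ^ r ∂μ :=
    integral_nonneg fun ω => Real.rpow_nonneg (abs_nonneg _) r
  set ρ : ℝ := ∫ ω, |ζ 0 ω| ^ r ∂μ with hρdef
  have hμ1int : Integrable (fun ω => |ζ 0 ω|) μ := hint.abs
  set M1 : ℝ := ∫ ω, |ζ 0 ω| ∂μ with hM1def
  have hM10 : 0 ≤ M1 := integral_nonneg fun ω => abs_nonneg _
  set m : ℕ := max 2 ⌈r⌉₊ with hmdef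
  have hm2 : 2 ≤ m := le_max_left _ _
  have hrm : r ≤ (m:ℝ) := by
    have h1 := Nat.le_ceil r
    have h2 : (⌈r⌉₊ : ℝ) ≤ (m:ℝ) := by exact_mod_cast le_max_right 2 ⌈r⌉₊
    linarith
  have hmR : (2:ℝ) ≤ (m:ℝ) := by exact_mod_cast hm2
  obtain ⟨D, hD1, hDb⟩ := momentBound μ m
  set e2r : ℝ := max (2 - r) 0 with he2rdef
  have he2r0 : 0 ≤ e2r := le_max_right _ _
  set θ : ℝ := (2*(m:ℝ) - r - e2r) / (2*(m:ℝ) - 2) with hθdef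
  have hden : (0:ℝ) < 2*(m:ℝ) - 2 := by linarith
  have hnum : (0:ℝ) ≤ 2*(m:ℝ) - r - e2r := by
    rcases le_total r 2 with h | h
    · rw [he2rdef, max_eq_left (by linarith)]; linarith
    · rw [he2rdef, max_eq_right (by linarith)]; linarith
  have hθ0 : 0 ≤ θ := div_nonneg hnum hden.le
  have hθkey : e2r + θ*(2*(m:ℝ) - 2) = 2*(m:ℝ) - r := by
    rw [hθdef, div_mul_cancel₀ _ hden.ne']
    ring
  have hexpo : ∀ a : ℕ, 2 ≤ a → a ≤ 2*m → max ((a:ℝ) - r) 0 ≤ e2r + θ*((a:ℝ) - 2) := by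
    intro a ha2 ham
    have ha2R : (2:ℝ) ≤ (a:ℝ) := by exact_mod_cast ha2
    have hamR : (a:ℝ) ≤ 2*(m:ℝ) := by exact_mod_cast ham
    rcases le_total r 2 with h | h
    · have he : e2r = 2 - r := max_eq_left (by linarith)
      have hθ1 : θ = 1 := by
        rw [hθdef, he, div_eq_one_iff_eq hden.ne']
        ring
      rw [he, hθ1]
      have : max ((a:ℝ) - r) 0 = (a:ℝ) - r := max_eq_left (by linarith)
      rw [this]
      ring_nf
      linarith
    · have he : e2r = 0 := max_eq_right (by linarith)
      have hθval : θ = (2*(m:ℝ) - r) / (2*(m:ℝ) - 2) := by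
        rw [hθdef, he]
        ring_nf
      have hg0 : (0:ℝ) ≤ (2*(m:ℝ) - r) / (2*(m:ℝ) - 2) * ((a:ℝ) - 2) :=
        mul_nonneg (div_nonneg (by linarith) hden.le) (by linarith)
      rw [he, hθval]
      refine max_le ?_ (by linarith)
      rw [zero_add, div_mul_eq_mul_div, le_div_iff₀ hden]
      nlinarith [mul_le_mul_of_nonneg_right hamR (by linarith : (0:ℝ) ≤ r - 2)]
  have hexpo2 : ((1 + e2r) * (m:ℝ)) ≤ 2*(m:ℝ) + (1 - r) := by
    rcases le_total r 2 with h | h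
    · rw [he2rdef, max_eq_left (by linarith)]
      nlinarith
    · rw [he2rdef, max_eq_right (by linarith)]
      linarith
  -- the truncation error
  set E : ℕ → ℝ := fun n => ∫ ω, (if |ζ 0 ω| ≤ (n:ℝ) then ζ 0 ω else 0) ∂μ with hEdef
  have hφmeas : ∀ b : ℝ, Measurable (fun x : ℝ => if |x| ≤ b then x else 0) := by
    intro b
    exact Measurable.ite (measurableSet_le measurable_abs measurable_const)
      measurable_id measurable_const
  have hZmeas : ∀ (b : ℝ) (k : ℕ), Measurable (fun ω => if |ζ k ω| ≤ b then ζ k ω else 0) :=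
    fun b k => (hφmeas b).comp (hmeas k)
  have hZabs : ∀ (b : ℝ) (k : ℕ) (ω : Ω), |if |ζ k ω| ≤ b then ζ k ω else 0| ≤ |ζ k ω| := by
    intro b k ω
    split_ifs with h
    · exact le_refl _
    · simpa using abs_nonneg (ζ k ω)
  have hZb : ∀ (b : ℝ) (k : ℕ) (ω : Ω), 0 ≤ b → |if |ζ k ω| ≤ b then ζ k ω else 0| ≤ b := by
    intro b k ω hb
    split_ifs with h
    · exact h
    · simpa using hb
  have hZint : ∀ (b : ℝ) (k : ℕ), 0 ≤ b →
      Integrable (fun ω => if |ζ k ω| ≤ b then ζ k ω else 0) μ :=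
    fun b k hb => integrable_of_abs_le (hZmeas b k) b (fun ω => hZb b k ω hb)
  have hEM1 : ∀ n : ℕ, |E n| ≤ M1 := by
    intro n
    refine (abs_integral_le' μ _).trans ?_
    refine integral_mono ((hZint _ 0 (by positivity)).abs) hμ1int ?_
    intro ω
    exact hZabs _ 0 ω
  have hEbound : ∀ n : ℕ, 1 ≤ n → |E n| ≤ ρ * (n:ℝ)^(1-r) := by
    intro n hn
    have hN1 : (1:ℝ) ≤ (n:ℝ) := by exact_mod_cast hn
    have hN0 : (0:ℝ) < (n:ℝ) := by linarith
    have hdiff : ∀ ω, |(if |ζ 0 ω| ≤ (n:ℝ) then ζ 0 ω else 0) - ζ 0 ω|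
        ≤ |ζ 0 ω| ^ r * (n:ℝ)^(1-r) := by
      intro ω
      split_ifs with h
      · simp only [sub_self, abs_zero]
        positivity
      · push_neg at h
        have hpos : (0:ℝ) < |ζ 0 ω| := lt_trans hN0 h
        have h1 : |(0:ℝ) - ζ 0 ω| = |ζ 0 ω| := by
          rw [zero_sub, abs_neg]
        rw [h1]
        calc |ζ 0 ω| = |ζ 0 ω| ^ (r + (1-r)) := by
              rw [show r + (1-r) = 1 by ring, Real.rpow_one]
          _ = |ζ 0 ω| ^ r * |ζ 0 ω| ^ (1-r) := Real.rpow_add hpos _ _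
          _ ≤ |ζ 0 ω| ^ r * (n:ℝ) ^ (1-r) := by
              have := Real.rpow_le_rpow_of_nonpos hN0 h.le (by linarith : 1 - r ≤ 0)
              have h2 : (0:ℝ) ≤ |ζ 0 ω| ^ r := Real.rpow_nonneg (abs_nonneg _) r
              nlinarith
    have h0 : E n = ∫ ω, ((if |ζ 0 ω| ≤ (n:ℝ) then ζ 0 ω else 0) - ζ 0 ω) ∂μ := by
      rw [integral_sub (hZint _ 0 hN0.le) hint, hmean, sub_zero]
    rw [h0]
    refine (abs_integral_le' μ _).trans ?_
    have hint2 : Integrable (fun ω => |ζ 0 ω| ^ r * (n:ℝ)^(1-r)) μ := hmom.mul_const _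
    calc ∫ ω, |(if |ζ 0 ω| ≤ (n:ℝ) then ζ 0 ω else 0) - ζ 0 ω| ∂μ
        ≤ ∫ ω, |ζ 0 ω| ^ r * (n:ℝ)^(1-r) ∂μ :=
          integral_mono (((hZint _ 0 hN0.le).sub hint).abs) hint2 hdiff
      _ = ρ * (n:ℝ)^(1-r) := integral_mul_const _ _
  set BB : ℝ := 2^(2*m)*(1+ρ) + 2^(2*m)*(1+M1)^(2*m) with hBBdef
  have hBB0 : (0:ℝ) ≤ BB := by positivity
  set C : ℝ := ρ + (2/δ)^(2*m) * (D * (BB + BB^m)) with hCdef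
  -- the key quantitative estimate
  have key : ∀ n : ℕ, 1 ≤ n → |E n| ≤ δ/2 →
      (μ {ω | (n : ℝ) * δ < |∑ k ∈ Finset.range n, ζ k ω|}).toReal
        ≤ C * (n:ℝ)^(1-r) := by
    intro n hn hen
    have hN1 : (1:ℝ) ≤ (n:ℝ) := by exact_mod_cast hn
    have hN0 : (0:ℝ) < (n:ℝ) := by linarith
    set Y : ℕ → Ω → ℝ := fun k ω => (if |ζ k ω| ≤ (n:ℝ) then ζ k ω else 0) - E n with hYdef
    set c : ℝ := (n:ℝ) ^ θ with hcdef
    set v : ℝ := BB * (n:ℝ) ^ e2r with hvdef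
    have hc1 : 1 ≤ c := Real.one_le_rpow hN1 hθ0
    have hc0 : (0:ℝ) < c := lt_of_lt_of_le one_pos hc1
    have hv0 : 0 ≤ v := mul_nonneg hBB0 (Real.rpow_nonneg hN0.le _)
    have hYmeas : ∀ k, Measurable (Y k) := fun k => ((hZmeas _ k).sub measurable_const)
    have hYindep : iIndepFun Y μ :=
      hindep.comp (fun _ => fun x : ℝ => (if |x| ≤ (n:ℝ) then x else 0) - E n)
        (fun _ => (hφmeas (n:ℝ)).sub measurable_const)
    have hYid : ∀ k, IdentDistrib (Y k) (Y 0) μ μ := fun k =>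
      (hid k).comp ((hφmeas (n:ℝ)).sub measurable_const)
    have hZid : ∀ k, IdentDistrib (fun ω => if |ζ k ω| ≤ (n:ℝ) then ζ k ω else 0)
        (fun ω => if |ζ 0 ω| ≤ (n:ℝ) then ζ 0 ω else 0) μ μ := fun k =>
      (hid k).comp (hφmeas (n:ℝ))
    have hZkint : ∀ k, Integrable (fun ω => if |ζ k ω| ≤ (n:ℝ) then ζ k ω else 0) μ :=
      fun k => hZint _ k hN0.le
    have hYmean : ∀ k, ∫ ω, Y k ω ∂μ = 0 := by
      intro k
      have h1 : ∫ ω, (if |ζ k ω| ≤ (n:ℝ) then ζ k ω else 0) ∂μ = E n := (hZid k).integral_eq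
      rw [hYdef]
      rw [integral_sub (hZkint k) (integrable_const _), h1]
      simp
    set c₀ : ℝ := (n:ℝ) + M1 with hc₀def
    have hc₀0 : (0:ℝ) ≤ c₀ := by positivity
    have hYb : ∀ k ω, |Y k ω| ≤ c₀ := by
      intro k ω
      rw [hYdef]
      calc |(if |ζ k ω| ≤ (n:ℝ) then ζ k ω else 0) - E n|
          ≤ |if |ζ k ω| ≤ (n:ℝ) then ζ k ω else 0| + |E n| := abs_sub _ _
        _ ≤ (n:ℝ) + M1 := add_le_add (hZb _ k ω hN0.le) (hEM1 n)
    have hYmom : ∀ k a, 2 ≤ a → a ≤ 2*m → ∫ ω, |Y k ω|^a ∂μ ≤ v * c^(a-2) := by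
      intro k a ha2 ham
      have hiden : ∫ ω, |Y k ω|^a ∂μ = ∫ ω, |Y 0 ω|^a ∂μ :=
        ((hYid k).comp (show Measurable (fun x : ℝ => |x|^a) from
          measurable_abs.pow_const a)).integral_eq
      rw [hiden]
      have ha2R : (2:ℝ) ≤ (a:ℝ) := by exact_mod_cast ha2
      have hZpt : ∀ ω, |if |ζ 0 ω| ≤ (n:ℝ) then ζ 0 ω else 0|^a
          ≤ (1 + |ζ 0 ω|^r) * (n:ℝ)^(max ((a:ℝ)-r) 0) := by
        intro ω
        set z : ℝ := |if |ζ 0 ω| ≤ (n:ℝ) then ζ 0 ω else 0| with hz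
        have hz0 : 0 ≤ z := abs_nonneg _
        have hzN : z ≤ (n:ℝ) := hZb _ 0 ω hN0.le
        have hzζ : z ≤ |ζ 0 ω| := hZabs _ 0 ω
        have h4 : (0:ℝ) ≤ |ζ 0 ω|^r := Real.rpow_nonneg (abs_nonneg _) r
        have hrpow : z^a = z^(a:ℝ) := (Real.rpow_natCast z a).symm
        rcases le_total r (a:ℝ) with hra | hra
        · have hmax : max ((a:ℝ)-r) 0 = (a:ℝ) - r := max_eq_left (by linarith)
          rw [hmax, hrpow]
          have h1 : z^(a:ℝ) = z^r * z^((a:ℝ)-r) := by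
            rw [← Real.rpow_add' hz0 (show r + ((a:ℝ)-r) ≠ 0 from by
              rw [show r + ((a:ℝ)-r) = (a:ℝ) from by ring]
              exact ne_of_gt (by linarith))]
            congr 1
            ring
          rw [h1]
          have h2 : z^r ≤ |ζ 0 ω|^r := Real.rpow_le_rpow hz0 hzζ (by linarith)
          have h3 : z^((a:ℝ)-r) ≤ (n:ℝ)^((a:ℝ)-r) := Real.rpow_le_rpow hz0 hzN (by linarith)
          have h6 : (0:ℝ) ≤ z^r := Real.rpow_nonneg hz0 r
          have h7 : (0:ℝ) ≤ (n:ℝ)^((a:ℝ)-r) := Real.rpow_nonneg hN0.le _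
          calc z^r * z^((a:ℝ)-r) ≤ |ζ 0 ω|^r * (n:ℝ)^((a:ℝ)-r) :=
                mul_le_mul h2 h3 (Real.rpow_nonneg hz0 _) h4
            _ ≤ (1 + |ζ 0 ω|^r) * (n:ℝ)^((a:ℝ)-r) :=
                mul_le_mul_of_nonneg_right (by linarith) h7
        · have hmax : max ((a:ℝ)-r) 0 = 0 := max_eq_right (by linarith)
          rw [hmax, Real.rpow_zero, mul_one, hrpow]
          rcases le_total z 1 with hz1 | hz1
          · have h5 : z^(a:ℝ) ≤ 1 := Real.rpow_le_one hz0 hz1 (by positivity)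
            linarith
          · have h1 : z^(a:ℝ) ≤ z^r := Real.rpow_le_rpow_of_exponent_le hz1 hra
            have h2 : z^r ≤ |ζ 0 ω|^r := Real.rpow_le_rpow hz0 hzζ (by linarith)
            linarith
      have hintZa : Integrable (fun ω => |if |ζ 0 ω| ≤ (n:ℝ) then ζ 0 ω else 0|^a) μ := by
        refine integrable_of_abs_le ((hZmeas _ 0).abs.pow_const a) ((n:ℝ)^a) fun ω => ?_
        rw [abs_pow, abs_abs]
        gcongr
        · exact hZb _ 0 ω hN0.le
      have hZmom : ∫ ω, |if |ζ 0 ω| ≤ (n:ℝ) then ζ 0 ω else 0|^a ∂μ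
          ≤ (1 + ρ) * (n:ℝ)^(max ((a:ℝ)-r) 0) := by
        have hint2 : Integrable (fun ω => (1 + |ζ 0 ω|^r) * (n:ℝ)^(max ((a:ℝ)-r) 0)) μ :=
          ((integrable_const 1).add hmom).mul_const _
        calc ∫ ω, |if |ζ 0 ω| ≤ (n:ℝ) then ζ 0 ω else 0|^a ∂μ
            ≤ ∫ ω, (1 + |ζ 0 ω|^r) * (n:ℝ)^(max ((a:ℝ)-r) 0) ∂μ :=
              integral_mono hintZa hint2 hZpt
          _ = (1 + ρ) * (n:ℝ)^(max ((a:ℝ)-r) 0) := by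
              rw [integral_mul_const, integral_add (integrable_const 1) hmom,
                integral_const]
              simp [hρdef]
      have hpt : ∀ ω, |Y 0 ω|^a
          ≤ 2^a * (|if |ζ 0 ω| ≤ (n:ℝ) then ζ 0 ω else 0|^a + |E n|^a) := by
        intro ω
        have h1 : |Y 0 ω| ≤ |if |ζ 0 ω| ≤ (n:ℝ) then ζ 0 ω else 0| + |E n| := by
          rw [hYdef]
          exact abs_sub _ _
        calc |Y 0 ω|^a ≤ (|if |ζ 0 ω| ≤ (n:ℝ) then ζ 0 ω else 0| + |E n|)^a := by
              gcongr
          _ ≤ 2^a * (|if |ζ 0 ω| ≤ (n:ℝ) then ζ 0 ω else 0|^a + |E n|^a) :=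
              add_pow_le' _ _ (abs_nonneg _) (abs_nonneg _) a
      have hEa : |E n|^a ≤ (1+M1)^(2*m) := by
        have h1 : |E n| ≤ 1 + M1 := le_trans (hEM1 n) (by linarith)
        calc |E n|^a ≤ (1+M1)^a := by
              gcongr
          _ ≤ (1+M1)^(2*m) := by
              have h2 : (1:ℝ) ≤ 1 + M1 := by linarith
              exact pow_le_pow_right₀ h2 ham
      have hintY0a : Integrable (fun ω => |Y 0 ω|^a) μ := by
        refine integrable_of_abs_le ((hYmeas 0).abs.pow_const a) (c₀^a) fun ω => ?_
        rw [abs_pow, abs_abs]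
        gcongr
        · exact hYb 0 ω
      have hintRHS : Integrable (fun ω =>
          2^a * (|if |ζ 0 ω| ≤ (n:ℝ) then ζ 0 ω else 0|^a + |E n|^a)) μ :=
        ((hintZa.add (integrable_const _)).const_mul _)
      have step1 : ∫ ω, |Y 0 ω|^a ∂μ
          ≤ 2^a * ((1+ρ)*(n:ℝ)^(max ((a:ℝ)-r) 0) + (1+M1)^(2*m)) := by
        calc ∫ ω, |Y 0 ω|^a ∂μ
            ≤ ∫ ω, 2^a * (|if |ζ 0 ω| ≤ (n:ℝ) then ζ 0 ω else 0|^a + |E n|^a) ∂μ :=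
              integral_mono hintY0a hintRHS hpt
          _ = 2^a * ((∫ ω, |if |ζ 0 ω| ≤ (n:ℝ) then ζ 0 ω else 0|^a ∂μ) + |E n|^a) := by
              rw [integral_const_mul, integral_add hintZa (integrable_const _),
                integral_const]
              simp
          _ ≤ 2^a * ((1+ρ)*(n:ℝ)^(max ((a:ℝ)-r) 0) + (1+M1)^(2*m)) := by
              have h0 : (0:ℝ) ≤ 2^a := by positivity
              nlinarith [hZmom, hEa]
      have hca : c^(a-2) = (n:ℝ)^(θ*((a:ℝ)-2)) := by
        rw [hcdef, ← Real.rpow_natCast ((n:ℝ)^θ) (a-2), ← Real.rpow_mul hN0.le]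
        congr 1
        rw [Nat.cast_sub ha2]
        push_cast
        ring
      have hNmax : (n:ℝ)^(max ((a:ℝ)-r) 0) ≤ (n:ℝ)^e2r * c^(a-2) := by
        rw [hca, ← Real.rpow_add hN0]
        exact Real.rpow_le_rpow_of_exponent_le hN1 (hexpo a ha2 ham)
      have h1c : (1:ℝ) ≤ (n:ℝ)^e2r * c^(a-2) := by
        have h1 := Real.one_le_rpow hN1 he2r0
        have h2 : (1:ℝ) ≤ c^(a-2) := one_le_pow₀ hc1
        nlinarith
      have h2a : (2:ℝ)^a ≤ 2^(2*m) := pow_le_pow_right₀ (by norm_num) ham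
      have hfinal : 2^a * ((1+ρ)*(n:ℝ)^(max ((a:ℝ)-r) 0) + (1+M1)^(2*m))
          ≤ 2^(2*m) * ((1+ρ)*((n:ℝ)^e2r * c^(a-2)) + (1+M1)^(2*m) * ((n:ℝ)^e2r * c^(a-2))) := by
        have t1 : (1+ρ)*(n:ℝ)^(max ((a:ℝ)-r) 0) ≤ (1+ρ)*((n:ℝ)^e2r * c^(a-2)) :=
          mul_le_mul_of_nonneg_left hNmax (by linarith)
        have t2 : ((1+M1):ℝ)^(2*m) ≤ (1+M1)^(2*m) * ((n:ℝ)^e2r * c^(a-2)) :=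
          le_mul_of_one_le_right (by positivity) h1c
        have t3 : (1+ρ)*(n:ℝ)^(max ((a:ℝ)-r) 0) + (1+M1)^(2*m)
            ≤ (1+ρ)*((n:ℝ)^e2r * c^(a-2)) + (1+M1)^(2*m) * ((n:ℝ)^e2r * c^(a-2)) :=
          add_le_add t1 t2
        have hLnn : (0:ℝ) ≤ (1+ρ)*(n:ℝ)^(max ((a:ℝ)-r) 0) + (1+M1)^(2*m) := by
          have := Real.rpow_nonneg hN0.le (max ((a:ℝ)-r) 0)
          positivity
        exact mul_le_mul h2a t3 hLnn (by positivity)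
      refine step1.trans (hfinal.trans (le_of_eq ?_))
      rw [hvdef, hBBdef]
      ring
    have hES := hDb Y hYmeas hYindep c₀ hc₀0 hYb hYmean c v hc1 hv0 hYmom m (by omega) le_rfl n
    -- event inclusion
    have hsub : {ω | (n:ℝ) * δ < |∑ k ∈ Finset.range n, ζ k ω|}
        ⊆ (⋃ k ∈ Finset.range n, {ω | (n:ℝ) < |ζ k ω|})
          ∪ {ω | (n:ℝ)*δ/2 < |∑ k ∈ Finset.range n, Y k ω|} := by
      intro ω hω
      simp only [Set.mem_setOf_eq] at hω
      by_cases hG : ∃ k ∈ Finset.range n, (n:ℝ) < |ζ k ω|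
      · left
        obtain ⟨k, hk, hk2⟩ := hG
        exact Set.mem_biUnion hk hk2
      · right
        push_neg at hG
        have hsum : ∑ k ∈ Finset.range n, Y k ω
            = (∑ k ∈ Finset.range n, ζ k ω) - (n:ℝ) * E n := by
          rw [hYdef]
          rw [Finset.sum_sub_distrib, Finset.sum_const, Finset.card_range, nsmul_eq_mul]
          congr 1
          refine Finset.sum_congr rfl fun k hk => ?_
          rw [if_pos (hG k hk)]
        simp only [Set.mem_setOf_eq]
        rw [hsum]
        have h1 : |∑ k ∈ Finset.range n, ζ k ω| - |(n:ℝ) * E n|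
            ≤ |(∑ k ∈ Finset.range n, ζ k ω) - (n:ℝ) * E n| := abs_sub_abs_le_abs_sub _ _
        have h2 : |(n:ℝ) * E n| ≤ (n:ℝ) * (δ/2) := by
          rw [abs_mul, abs_of_nonneg hN0.le]
          exact mul_le_mul_of_nonneg_left hen hN0.le
        linarith
    -- Markov for a single variable
    have hmeas0 : (μ {ω | (n:ℝ) < |ζ 0 ω|}).toReal * (n:ℝ)^r ≤ ρ := by
      have hfnn : 0 ≤ᵐ[μ] fun ω => |ζ 0 ω| ^ r :=
        Filter.Eventually.of_forall fun ω => Real.rpow_nonneg (abs_nonneg _) _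
      have h1 := mul_meas_ge_le_integral_of_nonneg hfnn hmom ((n:ℝ)^r)
      have hincl : {ω | (n:ℝ) < |ζ 0 ω|} ⊆ {ω | (n:ℝ)^r ≤ |ζ 0 ω|^r} := fun ω h =>
        Real.rpow_le_rpow hN0.le (le_of_lt h) (by linarith)
      have h2 : (μ {ω | (n:ℝ) < |ζ 0 ω|}).toReal ≤ (μ {ω | (n:ℝ)^r ≤ |ζ 0 ω|^r}).toReal :=
        ENNReal.toReal_mono (measure_ne_top μ _) (measure_mono hincl)
      calc (μ {ω | (n:ℝ) < |ζ 0 ω|}).toReal * (n:ℝ)^r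
          ≤ (μ {ω | (n:ℝ)^r ≤ |ζ 0 ω|^r}).toReal * (n:ℝ)^r :=
            mul_le_mul_of_nonneg_right h2 (Real.rpow_nonneg hN0.le r)
        _ = (n:ℝ)^r * (μ {ω | (n:ℝ)^r ≤ |ζ 0 ω|^r}).toReal := mul_comm _ _
        _ ≤ ρ := h1
    -- splitting the measure
    have hsplit : (μ {ω | (n:ℝ)*δ < |∑ k ∈ Finset.range n, ζ k ω|}).toReal
        ≤ (n:ℝ) * (μ {ω | (n:ℝ) < |ζ 0 ω|}).toReal
          + (μ {ω | (n:ℝ)*δ/2 < |∑ k ∈ Finset.range n, Y k ω|}).toReal := by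
      have h1 : μ {ω | (n:ℝ)*δ < |∑ k ∈ Finset.range n, ζ k ω|}
          ≤ μ (⋃ k ∈ Finset.range n, {ω | (n:ℝ) < |ζ k ω|})
            + μ {ω | (n:ℝ)*δ/2 < |∑ k ∈ Finset.range n, Y k ω|} :=
        (measure_mono hsub).trans (measure_union_le _ _)
      have h2 : μ (⋃ k ∈ Finset.range n, {ω | (n:ℝ) < |ζ k ω|})
          ≤ ∑ k ∈ Finset.range n, μ {ω | (n:ℝ) < |ζ k ω|} := measure_biUnion_finset_le _ _
      have h3 : ∀ k : ℕ, μ {ω | (n:ℝ) < |ζ k ω|} = μ {ω | (n:ℝ) < |ζ 0 ω|} := fun k =>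
        (hid k).measure_mem_eq (measurableSet_lt measurable_const measurable_abs)
      have h4 : ∑ k ∈ Finset.range n, μ {ω | (n:ℝ) < |ζ k ω|}
          = (n : ENNReal) * μ {ω | (n:ℝ) < |ζ 0 ω|} := by
        rw [Finset.sum_congr rfl fun k _ => h3 k, Finset.sum_const, Finset.card_range,
          nsmul_eq_mul]
      have h5 : μ {ω | (n:ℝ)*δ < |∑ k ∈ Finset.range n, ζ k ω|}
          ≤ (n : ENNReal) * μ {ω | (n:ℝ) < |ζ 0 ω|}
            + μ {ω | (n:ℝ)*δ/2 < |∑ k ∈ Finset.range n, Y k ω|} :=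
        h1.trans (add_le_add (h2.trans (le_of_eq h4)) le_rfl)
      have h6 : (n : ENNReal) * μ {ω | (n:ℝ) < |ζ 0 ω|} ≠ ⊤ :=
        ENNReal.mul_ne_top (ENNReal.natCast_ne_top n) (measure_ne_top μ _)
      have h7 : (n : ENNReal) * μ {ω | (n:ℝ) < |ζ 0 ω|}
          + μ {ω | (n:ℝ)*δ/2 < |∑ k ∈ Finset.range n, Y k ω|} ≠ ⊤ :=
        ENNReal.add_ne_top.mpr ⟨h6, measure_ne_top μ _⟩
      calc (μ {ω | (n:ℝ)*δ < |∑ k ∈ Finset.range n, ζ k ω|}).toReal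
          ≤ ((n : ENNReal) * μ {ω | (n:ℝ) < |ζ 0 ω|}
            + μ {ω | (n:ℝ)*δ/2 < |∑ k ∈ Finset.range n, Y k ω|}).toReal :=
            ENNReal.toReal_mono h7 h5
        _ = (n:ℝ) * (μ {ω | (n:ℝ) < |ζ 0 ω|}).toReal
            + (μ {ω | (n:ℝ)*δ/2 < |∑ k ∈ Finset.range n, Y k ω|}).toReal := by
            rw [ENNReal.toReal_add h6 (measure_ne_top μ _), ENNReal.toReal_mul]
            simp
    -- Markov with the (2m)-th moment
    have hSmeas : Measurable (fun ω => ∑ k ∈ Finset.range n, Y k ω) :=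
      Finset.measurable_sum _ fun k _ => hYmeas k
    have hSb : ∀ ω, |∑ k ∈ Finset.range n, Y k ω| ≤ (n:ℝ) * c₀ := by
      intro ω
      calc |∑ k ∈ Finset.range n, Y k ω| ≤ ∑ k ∈ Finset.range n, |Y k ω| :=
            Finset.abs_sum_le_sum_abs _ _
        _ ≤ ∑ k ∈ Finset.range n, c₀ := Finset.sum_le_sum fun k _ => hYb k ω
        _ = (n:ℝ) * c₀ := by simp [mul_comm]
    have hfint : Integrable (fun ω => (∑ k ∈ Finset.range n, Y k ω)^(2*m)) μ := by
      refine integrable_of_abs_le (hSmeas.pow_const _) (((n:ℝ)*c₀)^(2*m)) fun ω => ?_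
      rw [abs_pow]
      gcongr
      · exact hSb ω
    have hεpos : (0:ℝ) < ((n:ℝ)*δ/2)^(2*m) := by positivity
    have hmarkov2 : (μ {ω | (n:ℝ)*δ/2 < |∑ k ∈ Finset.range n, Y k ω|}).toReal
          * ((n:ℝ)*δ/2)^(2*m)
        ≤ ∫ ω, (∑ k ∈ Finset.range n, Y k ω)^(2*m) ∂μ := by
      have hfnn : 0 ≤ᵐ[μ] fun ω => (∑ k ∈ Finset.range n, Y k ω)^(2*m) :=
        Filter.Eventually.of_forall fun ω => by
          simp only [Pi.zero_apply]
          rw [pow_mul]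
          positivity
      have h1 := mul_meas_ge_le_integral_of_nonneg hfnn hfint (((n:ℝ)*δ/2)^(2*m))
      have hincl : {ω | (n:ℝ)*δ/2 < |∑ k ∈ Finset.range n, Y k ω|}
          ⊆ {ω | ((n:ℝ)*δ/2)^(2*m) ≤ (∑ k ∈ Finset.range n, Y k ω)^(2*m)} := by
        intro ω h
        simp only [Set.mem_setOf_eq] at h ⊢
        calc ((n:ℝ)*δ/2)^(2*m) ≤ |∑ k ∈ Finset.range n, Y k ω|^(2*m) := by
              gcongr
          _ = (∑ k ∈ Finset.range n, Y k ω)^(2*m) := by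
              rw [pow_mul, sq_abs, ← pow_mul]
      have h2 : (μ {ω | (n:ℝ)*δ/2 < |∑ k ∈ Finset.range n, Y k ω|}).toReal
          ≤ (μ {ω | ((n:ℝ)*δ/2)^(2*m) ≤ (∑ k ∈ Finset.range n, Y k ω)^(2*m)}).toReal :=
        ENNReal.toReal_mono (measure_ne_top μ _) (measure_mono hincl)
      calc (μ {ω | (n:ℝ)*δ/2 < |∑ k ∈ Finset.range n, Y k ω|}).toReal * ((n:ℝ)*δ/2)^(2*m)
          ≤ (μ {ω | ((n:ℝ)*δ/2)^(2*m) ≤ (∑ k ∈ Finset.range n, Y k ω)^(2*m)}).toReal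
              * ((n:ℝ)*δ/2)^(2*m) := mul_le_mul_of_nonneg_right h2 hεpos.le
        _ = ((n:ℝ)*δ/2)^(2*m)
            * (μ {ω | ((n:ℝ)*δ/2)^(2*m) ≤ (∑ k ∈ Finset.range n, Y k ω)^(2*m)}).toReal :=
            mul_comm _ _
        _ ≤ _ := h1
    -- rpow algebra
    have hcast2m2 : ((2*m-2 : ℕ):ℝ) = 2*(m:ℝ) - 2 := by
      rw [Nat.cast_sub (by omega)]
      push_cast
      ring
    have hcpow : c^(2*m-2) = (n:ℝ)^(θ*(2*(m:ℝ)-2)) := by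
      rw [hcdef, ← Real.rpow_natCast ((n:ℝ)^θ) (2*m-2), ← Real.rpow_mul hN0.le, hcast2m2]
    have hform1 : (n:ℝ) * v * c^(2*m-2) = BB * (n:ℝ)^(2*(m:ℝ) - r + 1) := by
      rw [hvdef, hcpow]
      have h1 : (n:ℝ)^(e2r) * (n:ℝ)^(θ*(2*(m:ℝ)-2)) = (n:ℝ)^(2*(m:ℝ) - r) := by
        rw [← Real.rpow_add hN0, hθkey]
      have h2 : (n:ℝ) * (n:ℝ)^(2*(m:ℝ)-r) = (n:ℝ)^(2*(m:ℝ) - r + 1) := by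
        rw [Real.rpow_add hN0, Real.rpow_one]
        ring
      calc (n:ℝ) * (BB * (n:ℝ)^e2r) * (n:ℝ)^(θ*(2*(m:ℝ)-2))
          = BB * ((n:ℝ) * ((n:ℝ)^e2r * (n:ℝ)^(θ*(2*(m:ℝ)-2)))) := by ring
        _ = BB * ((n:ℝ) * (n:ℝ)^(2*(m:ℝ)-r)) := by rw [h1]
        _ = BB * (n:ℝ)^(2*(m:ℝ)-r+1) := by rw [h2]
    have hform2 : ((n:ℝ) * v)^m = BB^m * (n:ℝ)^((1+e2r)*(m:ℝ)) := by
      have h1 : (n:ℝ) * v = BB * (n:ℝ)^(1+e2r) := by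
        rw [hvdef, Real.rpow_add hN0, Real.rpow_one]
        ring
      rw [h1, mul_pow, ← Real.rpow_natCast ((n:ℝ)^(1+e2r)) m, ← Real.rpow_mul hN0.le]
    have hE2m : ∫ ω, (∑ k ∈ Finset.range n, Y k ω)^(2*m) ∂μ
        ≤ D * ((BB + BB^m) * (n:ℝ)^(2*(m:ℝ) - r + 1)) := by
      refine hES.trans ?_
      rw [hform1, hform2]
      have h1 : (n:ℝ)^((1+e2r)*(m:ℝ)) ≤ (n:ℝ)^(2*(m:ℝ) - r + 1) :=
        Real.rpow_le_rpow_of_exponent_le hN1 (by linarith [hexpo2])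
      have h2 : (0:ℝ) ≤ BB^m := by positivity
      have h3 := mul_le_mul_of_nonneg_left h1 h2
      have h4 : (0:ℝ) ≤ (n:ℝ)^(2*(m:ℝ) - r + 1) := Real.rpow_nonneg hN0.le _
      nlinarith [h3, hBB0, hD1, h4]
    have hεform : ((n:ℝ)*δ/2)^(2*m) = (n:ℝ)^(2*(m:ℝ)) * (δ/2)^(2*m) := by
      rw [show (n:ℝ)*δ/2 = (n:ℝ)*(δ/2) from by ring, mul_pow,
        ← Real.rpow_natCast (n:ℝ) (2*m)]
      norm_num
    have hone : (2/δ)^(2*m) * (δ/2)^(2*m) = 1 := by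
      rw [← mul_pow]
      rw [show (2/δ) * (δ/2) = 1 from by field_simp]
      exact one_pow _
    have hsplit2 : (n:ℝ)^((1:ℝ)-r) * (n:ℝ)^(2*(m:ℝ)) = (n:ℝ)^(2*(m:ℝ) - r + 1) := by
      rw [← Real.rpow_add hN0]
      congr 1
      ring
    have hB2 : (μ {ω | (n:ℝ)*δ/2 < |∑ k ∈ Finset.range n, Y k ω|}).toReal
        ≤ (2/δ)^(2*m) * (D * (BB + BB^m)) * (n:ℝ)^(1-r) := by
      rw [← mul_le_mul_iff_left₀ hεpos]
      calc (μ {ω | (n:ℝ)*δ/2 < |∑ k ∈ Finset.range n, Y k ω|}).toReal * ((n:ℝ)*δ/2)^(2*m)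
          ≤ ∫ ω, (∑ k ∈ Finset.range n, Y k ω)^(2*m) ∂μ := hmarkov2
        _ ≤ D * ((BB + BB^m) * (n:ℝ)^(2*(m:ℝ) - r + 1)) := hE2m
        _ = (2/δ)^(2*m) * (D * (BB + BB^m)) * (n:ℝ)^(1-r) * ((n:ℝ)*δ/2)^(2*m) := by
            rw [hεform]
            rw [show (2/δ)^(2*m) * (D * (BB + BB^m)) * (n:ℝ)^(1-r)
                * ((n:ℝ)^(2*(m:ℝ)) * (δ/2)^(2*m))
                = ((2/δ)^(2*m) * (δ/2)^(2*m)) * (D * (BB + BB^m))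
                  * ((n:ℝ)^((1:ℝ)-r) * (n:ℝ)^(2*(m:ℝ))) from by ring]
            rw [hone, hsplit2]
            ring
    -- first tail term
    have hT1 : (n:ℝ) * (μ {ω | (n:ℝ) < |ζ 0 ω|}).toReal ≤ ρ * (n:ℝ)^(1-r) := by
      have hNsplit : (n:ℝ)^((1:ℝ)-r) * (n:ℝ)^r = (n:ℝ) := by
        rw [← Real.rpow_add hN0]
        norm_num
      have h1 : (n:ℝ)^((1:ℝ)-r) * ((μ {ω | (n:ℝ) < |ζ 0 ω|}).toReal * (n:ℝ)^r)
          = (n:ℝ) * (μ {ω | (n:ℝ) < |ζ 0 ω|}).toReal := by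
        rw [show (n:ℝ)^((1:ℝ)-r) * ((μ {ω | (n:ℝ) < |ζ 0 ω|}).toReal * (n:ℝ)^r)
            = ((n:ℝ)^((1:ℝ)-r) * (n:ℝ)^r) * (μ {ω | (n:ℝ) < |ζ 0 ω|}).toReal from by ring,
          hNsplit]
      rw [← h1]
      have := mul_le_mul_of_nonneg_left hmeas0 (Real.rpow_nonneg hN0.le ((1:ℝ)-r))
      linarith [this]
    calc (μ {ω | (n : ℝ) * δ < |∑ k ∈ Finset.range n, ζ k ω|}).toReal
        ≤ (n:ℝ) * (μ {ω | (n:ℝ) < |ζ 0 ω|}).toReal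
          + (μ {ω | (n:ℝ)*δ/2 < |∑ k ∈ Finset.range n, Y k ω|}).toReal := hsplit
      _ ≤ ρ * (n:ℝ)^(1-r) + (2/δ)^(2*m) * (D * (BB + BB^m)) * (n:ℝ)^(1-r) :=
          add_le_add hT1 hB2
      _ = C * (n:ℝ)^(1-r) := by
          rw [hCdef]
          ring
  -- conclusion
  rw [Asymptotics.isBigO_iff]
  refine ⟨C, ?_⟩
  have hev1 : ∀ᶠ n : ℕ in atTop, 1 ≤ n := Filter.eventually_ge_atTop 1
  have hev2 : ∀ᶠ n : ℕ in atTop, ρ * (n:ℝ)^(1-r) < δ/2 := by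
    have h1 : Filter.Tendsto (fun x : ℝ => x ^ (-(r-1))) atTop (nhds 0) :=
      tendsto_rpow_neg_atTop (by linarith)
    have h2 : Filter.Tendsto (fun n : ℕ => ((n:ℝ)) ^ (1-r)) atTop (nhds 0) := by
      have h3 := h1.comp (tendsto_natCast_atTop_atTop (R := ℝ))
      convert h3 using 2 with n
      simp only [Function.comp_apply]
      norm_num
    have h4 : Filter.Tendsto (fun n : ℕ => ρ * ((n:ℝ)) ^ (1-r)) atTop (nhds 0) := by
      have := h2.const_mul ρ
      simpa using this
    exact h4.eventually_lt_const (by positivity)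
  filter_upwards [hev1, hev2] with n hn1 hn2
  have hE2 : |E n| ≤ δ/2 := ((hEbound n hn1).trans_lt hn2).le
  have hN1 : (1:ℝ) ≤ (n:ℝ) := by exact_mod_cast hn1
  calc ‖(μ {ω | (n : ℝ) * δ < |∑ k ∈ Finset.range n, ζ k ω|}).toReal‖
      = (μ {ω | (n : ℝ) * δ < |∑ k ∈ Finset.range n, ζ k ω|}).toReal :=
        Real.norm_of_nonneg ENNReal.toReal_nonneg
    _ ≤ C * (n:ℝ)^(1-r) := key n hn1 hE2
    _ = C * ‖(n:ℝ)^((1:ℝ)-r)‖ := by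
        rw [Real.norm_of_nonneg (Real.rpow_nonneg (by positivity) _)]

end
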